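/- Assume g : ℝⁿ → [0, +∞] is lower semicontinuous and W : ℝⁿ → (−∞, +∞] is a lower semicontinuous proper convex function with W(x) → +∞ as ‖x‖ → +∞. Then for all x ∈ ℝⁿ and all 0 < s < h, the infimum defining Q_h^W(g)(x) is attained and the semigroup property holds: Q_h^W(g)(x) = Q_{h−s}^W(Q_s^W(g))(x). -/

import Mathlib

open Filter

open Filter

/-- A lower semicontinuous `EReal`-valued function attains its minimum on a
nonempty compact set. -/
lemma lsc_min_on_compact {α : Type*} [TopologicalSpace α] [T2Space α] {S : Set α}
    (hS : IsCompact S) (hne : S.Nonempty) {f : α → EReal} (hf : LowerSemicontinuous f) :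
    ∃ y ∈ S, ∀ z ∈ S, f y ≤ f z := by
  set m := sInf (f '' S) with hm
  rcases eq_or_lt_of_le (le_top : m ≤ ⊤) with hmt | hmt
  · obtain ⟨y, hy⟩ := hne
    refine ⟨y, hy, fun z hz => ?_⟩
    have : (⊤ : EReal) ≤ f z := hmt ▸ sInf_le (Set.mem_image_of_mem f hz)
    simp [top_le_iff.mp this]
  · haveI : Nonempty {a : EReal // m < a} := ⟨⟨⊤, hmt⟩⟩
    set C : {a : EReal // m < a} → Set α := fun a => S ∩ {z | f z ≤ a.1} with hC
    have hdir : Directed (· ⊇ ·) C := by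
      rintro ⟨a, ha⟩ ⟨b, hb⟩
      refine ⟨⟨min a b, lt_min ha hb⟩, ?_, ?_⟩
      · exact fun z hz => ⟨hz.1, show f z ≤ a from le_trans hz.2 (min_le_left a b)⟩
      · exact fun z hz => ⟨hz.1, show f z ≤ b from le_trans hz.2 (min_le_right a b)⟩
    have hCne : ∀ a, (C a).Nonempty := by
      rintro ⟨a, ha⟩
      obtain ⟨_, ⟨z, hzS, rfl⟩, hza⟩ := sInf_lt_iff.mp ha
      exact ⟨z, hzS, hza.le⟩
    have hCcl : ∀ a, IsClosed (C a) := fun a =>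
      hS.isClosed.inter (hf.isClosed_preimage a.1)
    have hCc : ∀ a, IsCompact (C a) := fun a =>
      hS.inter_right (hf.isClosed_preimage a.1)
    obtain ⟨y, hy⟩ :=
      IsCompact.nonempty_iInter_of_directed_nonempty_isCompact_isClosed C hdir hCne hCc hCcl
    simp only [Set.mem_iInter] at hy
    refine ⟨y, (hy ⟨⊤, hmt⟩).1, fun z hz => ?_⟩
    have hym : f y ≤ m := by
      by_contra hc
      push_neg at hc
      obtain ⟨r, hr1, hr2⟩ := EReal.exists_between_coe_real hc
      exact absurd (hy ⟨r, hr1⟩).2 (not_le.mpr hr2)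
    exact hym.trans (sInf_le (Set.mem_image_of_mem f hz))

/-- Adding a constant `c ≠ ⊥` commutes with an infimum of nonnegative `EReal`s. -/
lemma ereal_pos_mul_ne_bot (a : ℝ) (ha : 0 < a) (v : EReal) (hv : v ≠ ⊥) :
    (a : EReal) * v ≠ ⊥ := by
  induction v with
  | bot => exact absurd rfl hv
  | top => simp [EReal.coe_mul_top_of_pos ha]
  | coe r => rw [← EReal.coe_mul]; exact EReal.coe_ne_bot _

lemma ereal_iInf_add_const {ι : Type*} [Nonempty ι] (u : ι → EReal)
    (hu : ∃ b : ℝ, ∀ i, ((b : ℝ) : EReal) ≤ u i)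
    (c : EReal) (hc : c ≠ ⊥) : ⨅ i, (u i + c) = (⨅ i, u i) + c := by
  obtain ⟨b, hb⟩ := hu
  rcases eq_or_ne c ⊤ with rfl | hct
  · have h1 : ∀ i, u i + (⊤ : EReal) = ⊤ := fun i =>
      EReal.add_top_of_ne_bot ((lt_of_lt_of_le (EReal.bot_lt_coe b) (hb i)).ne')
    have h2 : (⨅ i, u i) + (⊤ : EReal) = ⊤ :=
      EReal.add_top_of_ne_bot ((lt_of_lt_of_le (EReal.bot_lt_coe b) (le_iInf hb)).ne')
    simp [h1, h2]
  · lift c to ℝ using ⟨hct, hc⟩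
    refine le_antisymm ?_ (le_iInf fun i => add_le_add_left (iInf_le u i) _)
    rw [← EReal.sub_le_iff_le_add (Or.inl (EReal.coe_ne_bot c)) (Or.inl (EReal.coe_ne_top c))]
    refine le_iInf fun i => ?_
    rw [EReal.sub_le_iff_le_add (Or.inl (EReal.coe_ne_bot c)) (Or.inl (EReal.coe_ne_top c))]
    exact iInf_le _ i

lemma ereal_distrib (a b : ℝ) (ha : 0 ≤ a) (hb : 0 ≤ b) (w : EReal) :
    (a : EReal) * w + (b : EReal) * w = (((a + b) : ℝ) : EReal) * w := by
  rw [EReal.coe_add, EReal.right_distrib_of_nonneg (by exact_mod_cast ha) (by exact_mod_cast hb)]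

lemma ereal_conv_mul (h s : ℝ) (hs : 0 < s) (hsh : s < h) (Z V Y : EReal)
    (hZ : Z ≠ ⊥) (hV : V ≠ ⊥)
    (hY : Y ≤ (((1 - s / h) : ℝ) : EReal) * Z + (((s / h) : ℝ) : EReal) * V) :
    (h : EReal) * Y ≤ (((h - s) : ℝ) : EReal) * Z + (s : EReal) * V := by
  have hh : (0 : ℝ) < h := hs.trans hsh
  induction Z with
  | bot => exact absurd rfl hZ
  | top =>
    rw [show (((h - s) : ℝ) : EReal) * ⊤ = ⊤ from EReal.coe_mul_top_of_pos (by linarith),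
      EReal.top_add_of_ne_bot]
    · exact le_top
    · induction V with
      | bot => exact absurd rfl hV
      | top => simp [EReal.coe_mul_top_of_pos hs]
      | coe r => rw [← EReal.coe_mul]; exact EReal.coe_ne_bot _
  | coe z =>
    induction V with
    | bot => exact absurd rfl hV
    | top =>
      rw [show ((s : ℝ) : EReal) * ⊤ = ⊤ from EReal.coe_mul_top_of_pos hs,
        EReal.add_top_of_ne_bot (by rw [← EReal.coe_mul]; exact EReal.coe_ne_bot _)]
      exact le_top
    | coe v =>
      rw [← EReal.coe_mul, ← EReal.coe_mul, ← EReal.coe_add] at hY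
      rw [← EReal.coe_mul, ← EReal.coe_mul, ← EReal.coe_add]
      calc (h : EReal) * Y ≤ (h : EReal) * (((1 - s / h) * z + s / h * v : ℝ) : EReal) :=
            mul_le_mul_of_nonneg_left hY (by exact_mod_cast hh.le)
        _ = (((h - s) * z + s * v : ℝ) : EReal) := by
            rw [← EReal.coe_mul]
            norm_cast
            field_simp



/-- if `g : ℝⁿ → [0,+∞]` is lsc and `W` is a lsc proper convex function with
`W(x) → +∞` as `‖x‖ → ∞`, then for all `x` and `0 < s < h` the infimum defining
`Q_h^W(g)(x)` is attained and `Q_h^W(g) = Q_{h-s}^W(Q_s^W(g))`. -/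
theorem Q_semigroup (n : ℕ) (g W : EuclideanSpace ℝ (Fin n) → EReal)
    (hg_lsc : LowerSemicontinuous g) (hg_nonneg : ∀ x, 0 ≤ g x)
    (hW_lsc : LowerSemicontinuous W)
    (hW_nbot : ∀ x, W x ≠ ⊥) (hW_proper : ∃ x, W x ≠ ⊤)
    (hW_conv : ∀ x y : EuclideanSpace ℝ (Fin n), ∀ t : ℝ, 0 ≤ t → t ≤ 1 →
      W ((1 - t) • x + t • y) ≤ (((1 - t) : ℝ) : EReal) * W x + ((t : ℝ) : EReal) * W y)
    (hW_coercive : Tendsto W (cocompact (EuclideanSpace ℝ (Fin n))) (nhds ⊤)) :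
    ∀ x : EuclideanSpace ℝ (Fin n), ∀ s h : ℝ, 0 < s → s < h →
      (∃ y : EuclideanSpace ℝ (Fin n),
        (⨅ z : EuclideanSpace ℝ (Fin n), g (x - h • z) + (h : EReal) * W z)
          = g (x - h • y) + (h : EReal) * W y)
      ∧ (⨅ z : EuclideanSpace ℝ (Fin n), g (x - h • z) + (h : EReal) * W z)
          = ⨅ z : EuclideanSpace ℝ (Fin n),
              (⨅ w : EuclideanSpace ℝ (Fin n),
                g ((x - (h - s) • z) - s • w) + (s : EReal) * W w)
              + (((h - s) : ℝ) : EReal) * W z := by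
  intro x s h hs hsh
  have hh : (0 : ℝ) < h := hs.trans hsh
  have hhs : (0 : ℝ) < h - s := by linarith
  have hg_nbot : ∀ u, g u ≠ ⊥ := fun u =>
    (lt_of_lt_of_le EReal.bot_lt_zero (hg_nonneg u)).ne'
  -- the function to be minimized
  set F : EuclideanSpace ℝ (Fin n) → EReal :=
    fun z => g (x - h • z) + (h : EReal) * W z with hFdef
  -- W is bounded below by a real constant
  have hWlb : ∃ b : ℝ, ∀ z, ((b : ℝ) : EReal) ≤ W z := by
    obtain ⟨K, hKc, hKsub⟩ := mem_cocompact.mp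
      (hW_coercive (Ioi_mem_nhds (by simp : (0 : EReal) < ⊤)))
    rcases K.eq_empty_or_nonempty with hKe | hKne
    · refine ⟨0, fun z => ?_⟩
      have hz : z ∈ Kᶜ := by simp [hKe]
      simpa using (hKsub hz).le
    · obtain ⟨y, hyK, hymin⟩ := lsc_min_on_compact hKc hKne hW_lsc
      rcases eq_top_or_lt_top (W y) with htop | hlt
      · refine ⟨0, fun z => ?_⟩
        by_cases hz : z ∈ K
        · have hWz := hymin z hz
          rw [htop] at hWz
          simp [top_le_iff.mp hWz]
        · simpa using (hKsub hz).le
      · obtain ⟨v, hv⟩ : ∃ v : ℝ, ((v : ℝ) : EReal) = W y :=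
          ⟨(W y).toReal, EReal.coe_toReal hlt.ne (hW_nbot y)⟩
        refine ⟨min v 0, fun z => ?_⟩
        by_cases hz : z ∈ K
        · calc ((min v 0 : ℝ) : EReal) ≤ ((v : ℝ) : EReal) := by
                exact_mod_cast min_le_left v 0
            _ = W y := hv
            _ ≤ W z := hymin z hz
        · calc ((min v 0 : ℝ) : EReal) ≤ (((0 : ℝ)) : EReal) := by
                exact_mod_cast min_le_right v 0
            _ ≤ W z := by simpa using (hKsub hz).le
  obtain ⟨b, hb⟩ := hWlb
  -- lower semicontinuity of F
  have lsc_mul : ∀ (a : ℝ), 0 < a → LowerSemicontinuous fun z => (a : EReal) * W z := by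
    intro a ha z₀ c hc
    dsimp only at hc
    obtain ⟨r, hr1, hr2⟩ := EReal.exists_between_coe_real hc
    have hrW : (((r / a : ℝ)) : EReal) < W z₀ := by
      rcases eq_top_or_lt_top (W z₀) with htop | hlt
      · rw [htop]; exact EReal.coe_lt_top _
      · obtain ⟨v, hv⟩ : ∃ v : ℝ, ((v : ℝ) : EReal) = W z₀ :=
          ⟨(W z₀).toReal, EReal.coe_toReal hlt.ne (hW_nbot z₀)⟩
        rw [← hv] at hr2 ⊢
        rw [← EReal.coe_mul, EReal.coe_lt_coe_iff] at hr2
        exact_mod_cast (div_lt_iff₀ ha).mpr (by linarith)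
    filter_upwards [hW_lsc z₀ _ hrW] with z hz
    calc c < (r : EReal) := hr1
      _ = (a : EReal) * (((r / a : ℝ)) : EReal) := by
          rw [← EReal.coe_mul]
          norm_cast
          field_simp
      _ ≤ (a : EReal) * W z := mul_le_mul_of_nonneg_left hz.le (by exact_mod_cast ha.le)
  have hmul_nbot : ∀ z, (h : EReal) * W z ≠ ⊥ := fun z =>
    ereal_pos_mul_ne_bot h hh (W z) (hW_nbot z)
  have lscF : LowerSemicontinuous F := by
    apply LowerSemicontinuous.add'
    · exact LowerSemicontinuous.comp (f := g) hg_lsc (continuous_const.sub (continuous_id.const_smul h))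
    · exact lsc_mul h hh
    · exact fun z => EReal.continuousAt_add (Or.inr (hmul_nbot z)) (Or.inl (hg_nbot _))
  constructor
  · -- attainment
    rcases eq_top_or_lt_top (⨅ z, F z) with hm | hm
    · refine ⟨0, ?_⟩
      rw [hm]
      exact (top_le_iff.mp (hm ▸ iInf_le F 0)).symm
    · obtain ⟨a₀, ha₀1, _⟩ := EReal.exists_between_coe_real hm
      set b' : ℝ := a₀ / h + 1 with hb'
      have hb'a : a₀ < h * b' := by
        have heq : h * b' = a₀ + h := by
          rw [hb']
          field_simp
        linarith
      obtain ⟨K, hKc, hKsub⟩ := mem_cocompact.mp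
        (hW_coercive (Ioi_mem_nhds (EReal.coe_lt_top b')))
      have hout : ∀ z, z ∉ K → (a₀ : EReal) < F z := by
        intro z hz
        have h1 : ((b' : ℝ) : EReal) ≤ W z := (hKsub hz).le
        have h2 : (((h * b' : ℝ)) : EReal) ≤ (h : EReal) * W z := by
          rw [EReal.coe_mul]
          exact mul_le_mul_of_nonneg_left h1 (by exact_mod_cast hh.le)
        have h3 : (h : EReal) * W z ≤ F z := le_add_of_nonneg_left (hg_nonneg _)
        calc (a₀ : EReal) < (((h * b' : ℝ)) : EReal) := by exact_mod_cast hb'a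
          _ ≤ F z := h2.trans h3
      set S : Set (EuclideanSpace ℝ (Fin n)) := K ∩ {z | F z ≤ (a₀ : EReal)} with hSdef
      have hSc : IsCompact S := hKc.inter_right (lscF.isClosed_preimage _)
      have hSne : S.Nonempty := by
        obtain ⟨z, hza⟩ := iInf_lt_iff.mp ha₀1
        refine ⟨z, ?_, hza.le⟩
        by_contra hzK
        exact absurd hza (not_lt.mpr (hout z hzK).le)
      obtain ⟨y, hyS, hymin⟩ := lsc_min_on_compact hSc hSne lscF
      refine ⟨y, le_antisymm (iInf_le F y) (le_iInf fun z => ?_)⟩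
      by_cases hzS : z ∈ S
      · exact hymin z hzS
      · have hyF : F y ≤ (a₀ : EReal) := hyS.2
        by_cases hzK : z ∈ K
        · have : ¬ F z ≤ (a₀ : EReal) := fun hle => hzS ⟨hzK, hle⟩
          exact hyF.trans (not_le.mp this).le
        · exact hyF.trans (hout z hzK).le
  · -- semigroup property
    set A : EuclideanSpace ℝ (Fin n) → EuclideanSpace ℝ (Fin n) → EReal :=
      fun z w => g ((x - (h - s) • z) - s • w) + (s : EReal) * W w with hAdef
    have hAlb : ∀ z, ∃ b0 : ℝ, ∀ w, ((b0 : ℝ) : EReal) ≤ A z w := by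
      intro z
      refine ⟨s * b, fun w => ?_⟩
      calc (((s * b : ℝ)) : EReal) = (s : EReal) * ((b : ℝ) : EReal) := EReal.coe_mul s b
        _ ≤ (s : EReal) * W w := mul_le_mul_of_nonneg_left (hb w) (by exact_mod_cast hs.le)
        _ ≤ A z w := le_add_of_nonneg_left (hg_nonneg _)
    have hcz_nbot : ∀ z, (((h - s : ℝ)) : EReal) * W z ≠ ⊥ := fun z =>
      ereal_pos_mul_ne_bot _ hhs (W z) (hW_nbot z)
    have hrw : (⨅ z, (⨅ w, A z w) + (((h - s : ℝ)) : EReal) * W z)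
        = ⨅ z, ⨅ w, (A z w + (((h - s : ℝ)) : EReal) * W z) :=
      iInf_congr fun z => (ereal_iInf_add_const (A z) (hAlb z) _ (hcz_nbot z)).symm
    rw [show (⨅ z, (⨅ w, g ((x - (h - s) • z) - s • w) + (s : EReal) * W w)
          + (((h - s) : ℝ) : EReal) * W z)
        = ⨅ z, (⨅ w, A z w) + (((h - s : ℝ)) : EReal) * W z from rfl, hrw]
    apply le_antisymm
    · refine le_iInf fun z => le_iInf fun w => ?_
      set y : EuclideanSpace ℝ (Fin n) := (1 - s / h) • z + (s / h) • w with hydef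
      have ht0 : (0 : ℝ) ≤ s / h := div_nonneg hs.le hh.le
      have ht1 : s / h ≤ 1 := (div_le_one hh).mpr hsh.le
      have hy : x - h • y = (x - (h - s) • z) - s • w := by
        rw [hydef, smul_add, smul_smul, smul_smul]
        have h1 : h * (1 - s / h) = h - s := by field_simp
        have h2 : h * (s / h) = s := by field_simp
        rw [h1, h2, sub_sub]
      have hkey : (h : EReal) * W y
          ≤ (((h - s : ℝ)) : EReal) * W z + (s : EReal) * W w :=
        ereal_conv_mul h s hs hsh (W z) (W w) (W y) (hW_nbot z) (hW_nbot w)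
          (hW_conv z w (s / h) ht0 ht1)
      calc (⨅ z', F z') ≤ F y := iInf_le F y
        _ = g ((x - (h - s) • z) - s • w) + (h : EReal) * W y := by
            show g (x - h • y) + (h : EReal) * W y = _
            rw [hy]
        _ ≤ g ((x - (h - s) • z) - s • w)
            + ((((h - s : ℝ)) : EReal) * W z + (s : EReal) * W w) :=
              add_le_add_right hkey _
        _ = A z w + (((h - s : ℝ)) : EReal) * W z := by
            show _ = g ((x - (h - s) • z) - s • w) + (s : EReal) * W w
              + (((h - s : ℝ)) : EReal) * W z
            abel
    · refine le_iInf fun y => ?_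
      have harg : (x - (h - s) • y) - s • y = x - h • y := by
        rw [sub_sub, ← add_smul, sub_add_cancel]
      have hterm : A y y + (((h - s : ℝ)) : EReal) * W y = F y := by
        show g ((x - (h - s) • y) - s • y) + (s : EReal) * W y + (((h - s : ℝ)) : EReal) * W y
          = g (x - h • y) + (h : EReal) * W y
        rw [harg, add_assoc, ereal_distrib s (h - s) hs.le hhs.le (W y)]
        have hsum : s + (h - s) = h := by ring
        rw [hsum]
      exact iInf_le_of_le y (iInf_le_of_le y (le_of_eq hterm))
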